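/- Let i and j be exponent vectors (in ℤ_{≥0}^n) of monomials of degree r+1. Define a symmetric matrix B indexed by such vectors by B_{ij} = k−1 if every entry of i+j is even, and B_{ij} = −1 otherwise. Then every k×k principal submatrix of B is positive semidefinite, i.e., B ∈ (FW_k^{binom(n+r, r+1)})*. -/

import Mathlib

open Matrix

/-- `A` has factor width at most `k`: `A = V * Vᵀ` where every column of `V`
has at most `k` nonzero entries. -/
def HasFactorWidthLE {ι : Type*} [Fintype ι] (A : Matrix ι ι ℝ) (k : ℕ) : Prop :=
  ∃ (m : ℕ) (V : Matrix ι (Fin m) ℝ),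
    A = V * Vᵀ ∧ ∀ j, {i | V i j ≠ 0}.ncard ≤ k

/-- The cone `FW^n_k` of psd `n × n` matrices of factor width at most `k`. -/
def FW (n k : ℕ) : Set (Matrix (Fin n) (Fin n) ℝ) :=
  {A | A.PosSemidef ∧ HasFactorWidthLE A k}

/-- The principal submatrix of `A` indexed by the finite set `K`. -/
def principalSub {ι : Type*} (A : Matrix ι ι ℝ) (K : Finset ι) :
    Matrix K K ℝ :=
  A.submatrix (fun i => (i : ι)) (fun j => (j : ι))

/-- The cone `(FW^n_k)^*`: symmetric matrices all of whose `k × k` principal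
submatrices are psd. -/
def FWdual (n k : ℕ) : Set (Matrix (Fin n) (Fin n) ℝ) :=
  {A | A.IsSymm ∧ ∀ K : Finset (Fin n), K.card = k → (principalSub A K).PosSemidef}

/-- The dual cone (within symmetric matrices) with respect to the trace inner
product `⟨Y, X⟩ = trace (Y * Xᵀ)`. -/
def dualSet {n : ℕ} (C : Set (Matrix (Fin n) (Fin n) ℝ)) :
    Set (Matrix (Fin n) (Fin n) ℝ) :=
  {Y | Y.IsSymm ∧ ∀ X ∈ C, 0 ≤ (Y * Xᵀ).trace}

/-- `A` spans an extreme ray of the cone `C`. -/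
def SpansExtremeRay {E : Type*} [AddCommMonoid E] [Module ℝ E]
    (C : Set E) (A : E) : Prop :=
  A ∈ C ∧ A ≠ 0 ∧ ∀ X Y, X ∈ C → Y ∈ C → A = X + Y →
    ∃ a b : ℝ, 0 ≤ a ∧ 0 ≤ b ∧ X = a • A ∧ Y = b • A

/-- `p` is a sum of squares of `k`-nomials (polynomials with at most `k` monomials). -/
def IsSOkS {n : ℕ} (k : ℕ) (p : MvPolynomial (Fin n) ℝ) : Prop :=
  ∃ (m : ℕ) (q : Fin m → MvPolynomial (Fin n) ℝ),
    (∀ i, (q i).support.card ≤ k) ∧ p = ∑ i, (q i) ^ 2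

/-- the matrix `B` indexed by the degree-`(r+1)` exponent vectors with
entry `k - 1` when `i + j` is even and `-1` otherwise has all of its `k × k` principal
submatrices psd, i.e. `B ∈ (FW_k)^*`. -/
theorem stmt15 (n r k : ℕ) (N : ℕ) (hN : N = Nat.choose (n + r) (r + 1))
    (z : Fin N → (Fin n →₀ ℕ)) (hz : Function.Injective z)
    (hzr : Set.range z = {m : Fin n →₀ ℕ | (m.sum fun _ e => e) = r + 1})
    (B : Matrix (Fin N) (Fin N) ℝ)
    (hB : ∀ i j, B i j = if ∀ t, (z i + z j) t % 2 = 0 then (k : ℝ) - 1 else -1) :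
    ∀ K : Finset (Fin N), K.card = k → (principalSub B K).PosSemidef := by
  intro K hK
  classical
  -- parity vector of each index
  set p : K → (Fin n → ℕ) := fun i t => (z i) t % 2 with hp
  have key : ∀ i j : K, B i j = (k : ℝ) * (if p i = p j then 1 else 0) - 1 := by
    intro i j
    rw [hB]
    by_cases h : p i = p j
    · have : ∀ t, (z i + z j) t % 2 = 0 := by
        intro t
        have ht : (z (i : Fin N)) t % 2 = (z (j : Fin N)) t % 2 := congrFun h t
        have : ((z i) t + (z j) t) % 2 = 0 := by omega
        simpa [Finsupp.add_apply] using this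
      rw [if_pos this, if_pos h]
      ring
    · have : ¬ ∀ t, (z i + z j) t % 2 = 0 := by
        intro hall
        apply h
        funext t
        have := hall t
        rw [Finsupp.add_apply] at this
        simp only [hp]
        omega
      rw [if_neg this, if_neg h]
      ring
  rw [posSemidef_iff_dotProduct_mulVec]
  constructor
  · -- Hermitian
    ext i j
    simp only [principalSub, conjTranspose_apply, submatrix_apply, star, id]
    rw [key, key]
    by_cases h : p i = p j
    · rw [if_pos h, if_pos h.symm]
    · rw [if_neg h, if_neg (Ne.symm h)]
  · intro x
    -- the class sums
    set C : Finset (Fin n → ℕ) := Finset.univ.image p with hC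
    set s : (Fin n → ℕ) → ℝ := fun c => ∑ j ∈ Finset.univ.filter (fun j => p j = c), x j
      with hs
    have hfib : ∀ f : K → ℝ,
        ∑ c ∈ C, ∑ i ∈ Finset.univ.filter (fun i => p i = c), f i = ∑ i, f i := by
      intro f
      rw [Finset.sum_fiberwise_eq_sum_filter]
      congr 1
      apply Finset.filter_true_of_mem
      intro i _
      exact Finset.mem_image_of_mem p (Finset.mem_univ i)
    have h1 : ∀ i : K, ∑ j : K, (if p i = p j then x j else 0) = s (p i) := by
      intro i
      simp only [hs, Finset.sum_filter]
      exact Finset.sum_congr rfl fun j _ => by simp [eq_comm]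
    set T : ℝ := ∑ i : K, x i with hT
    have hrow : ∀ i : K, ∑ j : K, B i j * x j = (k : ℝ) * s (p i) - T := by
      intro i
      have : ∀ j : K, B i j * x j
          = (k : ℝ) * (if p i = p j then x j else 0) - x j := by
        intro j
        rw [key]
        by_cases h : p i = p j <;> simp [h] <;> ring
      rw [Finset.sum_congr rfl fun j _ => this j, Finset.sum_sub_distrib,
        ← Finset.mul_sum, h1]
    have hQ : (star x) ⬝ᵥ ((principalSub B K) *ᵥ x)
        = (k : ℝ) * (∑ i : K, x i * s (p i)) - T * T := by
      simp only [dotProduct, mulVec, star, id, Pi.star_apply, star_trivial]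
      have : ∀ i : K, x i * (∑ j : K, (principalSub B K) i j * x j)
          = (k : ℝ) * (x i * s (p i)) - x i * T := by
        intro i
        have : ∑ j : K, (principalSub B K) i j * x j = (k : ℝ) * s (p i) - T := by
          simpa [principalSub] using hrow i
        rw [this]; ring
      rw [Finset.sum_congr rfl fun i _ => this i, Finset.sum_sub_distrib,
        ← Finset.mul_sum, ← Finset.sum_mul]
    have hTsum : T = ∑ c ∈ C, s c := (hfib x).symm
    have hS2 : ∑ i : K, x i * s (p i) = ∑ c ∈ C, s c ^ 2 := by
      rw [← hfib (fun i => x i * s (p i))]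
      refine Finset.sum_congr rfl fun c _ => ?_
      have : ∑ i ∈ Finset.univ.filter (fun i => p i = c), x i * s (p i)
          = ∑ i ∈ Finset.univ.filter (fun i => p i = c), x i * s c := by
        refine Finset.sum_congr rfl fun i hi => ?_
        rw [(Finset.mem_filter.mp hi).2]
      rw [this, ← Finset.sum_mul, sq]
    have hcard : (C.card : ℝ) ≤ (k : ℝ) := by
      have h1 : C.card ≤ Fintype.card K := by
        exact (Finset.card_image_le (s := (Finset.univ : Finset K)) (f := p)).trans_eq Finset.card_univ
      have h2 : Fintype.card K = k := by rw [Fintype.card_coe, hK]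
      exact_mod_cast h1.trans h2.le
    have hcs := sq_sum_le_card_mul_sum_sq (s := C) (f := s)
    have hnn : 0 ≤ ∑ c ∈ C, s c ^ 2 := Finset.sum_nonneg fun c _ => sq_nonneg _
    rw [hQ, hS2, hTsum]
    nlinarith [hcs, hnn, hcard]
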